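/- Let Ω ⊂ ℝ³ be a bounded, smooth, connected domain whose boundary is a sphere (or concentric spheres) centered at the origin. Then the kernel of S on H¹_{σ,tan}(Ω) (divergence-free H¹ vector fields tangent to ∂Ω with Sw = 0) is exactly the 3-dimensional space spanned by Y₁(x) = (0, −x₃, x₂), Y₂(x) = (x₃, 0, −x₁), Y₃(x) = (−x₂, x₁, 0). -/

import Mathlib

open Matrix Metric

lemma vec_decomp (u : Fin 3 → ℝ) :
    u = u 0 • (Pi.single 0 1 : Fin 3 → ℝ) + u 1 • (Pi.single 1 1 : Fin 3 → ℝ)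
      + u 2 • (Pi.single 2 1 : Fin 3 → ℝ) := by
  funext i; fin_cases i <;> simp [Pi.single_apply]

lemma skew_bilin (L : (Fin 3 → ℝ) →L[ℝ] (Fin 3 → ℝ))
    (h : ∀ i j, L (Pi.single j 1) i + L (Pi.single i 1) j = 0) :
    ∀ u v, L u ⬝ᵥ v + L v ⬝ᵥ u = 0 := by
  intro u v
  rw [vec_decomp u, vec_decomp v]
  simp [map_add, _root_.map_smul, Pi.single_apply, dotProduct, Fin.sum_univ_three, Pi.add_apply, Pi.smul_apply,
    smul_eq_mul]
  linear_combination (u 0 * v 0) * h 0 0 + (u 1 * v 0) * h 0 1 + (u 2 * v 0) * h 0 2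
    + (u 0 * v 1) * h 1 0 + (u 1 * v 1) * h 1 1 + (u 2 * v 1) * h 1 2
    + (u 0 * v 2) * h 2 0 + (u 1 * v 2) * h 2 1 + (u 2 * v 2) * h 2 2

noncomputable def dotCLM (c : Fin 3 → ℝ) : (Fin 3 → ℝ) →L[ℝ] ℝ :=
  LinearMap.toContinuousLinearMap
    { toFun := fun z => z ⬝ᵥ c
      map_add' := fun a b => add_dotProduct a b c
      map_smul' := fun r a => smul_dotProduct r a c }

@[simp] lemma dotCLM_apply (c z : Fin 3 → ℝ) : dotCLM c z = z ⬝ᵥ c := rfl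

lemma ortho_step (w : (Fin 3 → ℝ) → (Fin 3 → ℝ)) (U : Set (Fin 3 → ℝ))
    (hconv : Convex ℝ U)
    (hdiff : ∀ x ∈ U, DifferentiableAt ℝ w x)
    (hskew : ∀ x ∈ U, ∀ u v, fderiv ℝ w x u ⬝ᵥ v + fderiv ℝ w x v ⬝ᵥ u = 0)
    {x y : Fin 3 → ℝ} (hx : x ∈ U) (hy : y ∈ U) :
    (w x - w y) ⬝ᵥ (x - y) = 0 := by
  set c := x - y with hc
  set g : ℝ → ℝ := fun t => dotCLM c (w (y + t • c)) with hg
  have hseg : ∀ t ∈ Set.Icc (0:ℝ) 1, y + t • c ∈ U := by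
    intro t ht
    have h1 : y + t • c = (1 - t) • y + t • x := by rw [hc]; module
    rw [h1]
    exact hconv hy hx (by linarith [ht.2]) ht.1 (by ring)
  have hderiv : ∀ t ∈ Set.Icc (0:ℝ) 1, HasDerivAt g 0 t := by
    intro t ht
    have hp := hseg t ht
    have hγ : HasDerivAt (fun t : ℝ => y + t • c) c t := by
      simpa using ((hasDerivAt_id t).smul_const c).const_add y
    have h1 : HasDerivAt (fun t => w (y + t • c)) (fderiv ℝ w (y + t • c) c) t :=
      (hdiff _ hp).hasFDerivAt.comp_hasDerivAt t hγ
    have h2 : HasDerivAt g (dotCLM c (fderiv ℝ w (y + t • c) c)) t :=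
      (dotCLM c).hasFDerivAt.comp_hasDerivAt t h1
    have h3 : dotCLM c (fderiv ℝ w (y + t • c) c) = 0 := by
      have := hskew _ hp c c
      simp only [dotCLM_apply]
      linarith
    rwa [h3] at h2
  have hcont : ContinuousOn g (Set.Icc 0 1) :=
    fun t ht => ((hderiv t ht).continuousAt).continuousWithinAt
  have hconst := constant_of_has_deriv_right_zero hcont
    (fun t ht => (hderiv t ⟨ht.1, ht.2.le⟩).hasDerivWithinAt)
  have h10 : g 1 = g 0 := hconst 1 (by norm_num)
  simp only [hg, one_smul, zero_smul, add_zero] at h10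
  have hyx : y + c = x := by rw [hc]; abel
  rw [hyx] at h10
  simp only [dotCLM_apply] at h10
  rw [sub_dotProduct]
  linarith

lemma affine_step (w : (Fin 3 → ℝ) → (Fin 3 → ℝ)) (U : Set (Fin 3 → ℝ))
    (hU : IsOpen U) (hconv : Convex ℝ U)
    (hdiff : ∀ x ∈ U, DifferentiableAt ℝ w x)
    (hskew : ∀ x ∈ U, ∀ u v, fderiv ℝ w x u ⬝ᵥ v + fderiv ℝ w x v ⬝ᵥ u = 0)
    {x y : Fin 3 → ℝ} (hx : x ∈ U) (hy : y ∈ U) :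
    w x - w y = fderiv ℝ w x (x - y) := by
  set L := fderiv ℝ w x with hL
  set h : (Fin 3 → ℝ) → ℝ := fun x' => ∑ i, (w x' i - w y i) * (x' i - y i) with hh
  have hD : HasFDerivAt h
      (∑ i, ((w x i - w y i) • (ContinuousLinearMap.proj i : (Fin 3 → ℝ) →L[ℝ] ℝ)
        + (x i - y i) • ((ContinuousLinearMap.proj i).comp L))) x := by
    apply HasFDerivAt.fun_sum
    intro i _
    have hf : HasFDerivAt (fun x' => w x' i - w y i)
        ((ContinuousLinearMap.proj i).comp L) x :=
      (((ContinuousLinearMap.proj i).hasFDerivAt).comp x (hdiff x hx).hasFDerivAt).sub_const _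
    have hg : HasFDerivAt (fun x' : Fin 3 → ℝ => x' i - y i)
        (ContinuousLinearMap.proj i : (Fin 3 → ℝ) →L[ℝ] ℝ) x := by
      have hP : HasFDerivAt
          (fun x' : Fin 3 → ℝ => (ContinuousLinearMap.proj i : (Fin 3 → ℝ) →L[ℝ] ℝ) x' - y i)
          (ContinuousLinearMap.proj i : (Fin 3 → ℝ) →L[ℝ] ℝ) x :=
        (ContinuousLinearMap.hasFDerivAt _).sub_const _
      simpa using hP
    exact HasFDerivAt.mul (𝕜 := ℝ) hf hg
  have hzero : HasFDerivAt h (0 : (Fin 3 → ℝ) →L[ℝ] ℝ) x := by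
    have hev : (fun _ : Fin 3 → ℝ => (0:ℝ)) =ᶠ[nhds x] h := by
      filter_upwards [hU.mem_nhds hx] with x' hx'
      have := ortho_step w U hconv hdiff hskew hx' hy
      simp only [hh]
      rw [← this]
      simp [dotProduct]
    exact (hasFDerivAt_const (0:ℝ) x).congr_of_eventuallyEq hev.symm
  have hDz := hD.unique hzero
  have key : ∀ v, (w x - w y) ⬝ᵥ v = L (x - y) ⬝ᵥ v := by
    intro v
    have h1 : (∑ i, ((w x i - w y i) • (ContinuousLinearMap.proj i : (Fin 3 → ℝ) →L[ℝ] ℝ)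
        + (x i - y i) • ((ContinuousLinearMap.proj i).comp L))) v = 0 := by rw [hDz]; rfl
    simp only [ContinuousLinearMap.sum_apply, ContinuousLinearMap.add_apply,
      ContinuousLinearMap.smul_apply, ContinuousLinearMap.comp_apply,
      ContinuousLinearMap.proj_apply, smul_eq_mul] at h1
    have h2 : ∑ i, ((w x i - w y i) * v i + (x i - y i) * L v i)
        = (w x - w y) ⬝ᵥ v + L v ⬝ᵥ (x - y) := by
      rw [Finset.sum_add_distrib]
      simp [dotProduct, dotProduct_comm, mul_comm]
    have h3 := hskew x hx v (x - y)
    rw [h2] at h1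
    linarith
  funext k
  have := key (Pi.single k 1)
  simpa [dotProduct_single] using this

lemma local_struct (w : (Fin 3 → ℝ) → (Fin 3 → ℝ)) (Ω : Set (Fin 3 → ℝ))
    (hopen : IsOpen Ω)
    (hdiff : ∀ x ∈ Ω, DifferentiableAt ℝ w x)
    (hskew : ∀ x ∈ Ω, ∀ u v, fderiv ℝ w x u ⬝ᵥ v + fderiv ℝ w x v ⬝ᵥ u = 0)
    {x : Fin 3 → ℝ} (hx : x ∈ Ω) :
    ∃ ε > 0, ball x ε ⊆ Ω ∧ ∀ y ∈ ball x ε,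
      fderiv ℝ w y = fderiv ℝ w x ∧ w y = w x + fderiv ℝ w x (y - x) := by
  obtain ⟨ε, hε, hball⟩ := Metric.isOpen_iff.1 hopen x hx
  refine ⟨ε, hε, hball, ?_⟩
  have hconv : Convex ℝ (ball x ε) := convex_ball x ε
  have hd' : ∀ z ∈ ball x ε, DifferentiableAt ℝ w z := fun z hz => hdiff z (hball hz)
  have hs' : ∀ z ∈ ball x ε, ∀ u v, fderiv ℝ w z u ⬝ᵥ v + fderiv ℝ w z v ⬝ᵥ u = 0 :=
    fun z hz => hskew z (hball hz)
  have hxball : x ∈ ball x ε := mem_ball_self hε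
  set L := fderiv ℝ w x with hL
  have haff : ∀ z ∈ ball x ε, w z = w x + L (z - x) := by
    intro z hz
    have := affine_step w (ball x ε) isOpen_ball hconv hd' hs' hxball hz
    have h2 : w x - w z = L (x - z) := this
    have := h2
    rw [map_sub] at this
    funext k
    have hk := congrFun this k
    simp only [Pi.sub_apply, Pi.add_apply, map_sub] at *
    linarith [congrFun h2 k, congrFun (map_sub L x z) k]
  intro y hy
  have hfd : fderiv ℝ w y = L := by
    have hev : (fun z => w x + (L z - L x)) =ᶠ[nhds y] w := by
      filter_upwards [isOpen_ball.mem_nhds hy] with z hz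
      rw [haff z hz, map_sub]
    have hF : HasFDerivAt (fun z => w x + (L z - L x)) L y :=
      ((L.hasFDerivAt).sub_const (L x)).const_add (w x)
    exact (hF.congr_of_eventuallyEq hev.symm).fderiv
  exact ⟨hfd, haff y hy⟩

lemma global_affine (w : (Fin 3 → ℝ) → (Fin 3 → ℝ)) (Ω : Set (Fin 3 → ℝ))
    (hopen : IsOpen Ω) (hconn : IsPreconnected Ω)
    (hdiff : ∀ x ∈ Ω, DifferentiableAt ℝ w x)
    (hskew : ∀ x ∈ Ω, ∀ u v, fderiv ℝ w x u ⬝ᵥ v + fderiv ℝ w x v ⬝ᵥ u = 0)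
    {x₀ : Fin 3 → ℝ} (hx₀ : x₀ ∈ Ω) :
    ∀ x ∈ Ω, fderiv ℝ w x = fderiv ℝ w x₀ ∧
      w x = w x₀ + fderiv ℝ w x₀ (x - x₀) := by
  set L₀ := fderiv ℝ w x₀ with hL₀
  set S := {x | fderiv ℝ w x = L₀ ∧ w x = w x₀ + L₀ (x - x₀)} with hS
  set u := Ω ∩ S with hu
  set v := Ω \ S with hv
  have hou : IsOpen u := by
    rw [Metric.isOpen_iff]
    rintro x ⟨hxΩ, hxL, hxw⟩
    obtain ⟨ε, hε, hball, hloc⟩ := local_struct w Ω hopen hdiff hskew hxΩ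
    refine ⟨ε, hε, fun y hy => ⟨hball hy, ?_, ?_⟩⟩
    · rw [(hloc y hy).1, hxL]
    · rw [(hloc y hy).2, hxL, hxw]
      funext k
      simp only [Pi.add_apply, map_sub]
      have e1 := congrFun (map_sub L₀ y x) k
      have e2 := congrFun (map_sub L₀ x x₀) k
      have e3 := congrFun (map_sub L₀ y x₀) k
      simp only [Pi.sub_apply] at *
      linarith
  have hov : IsOpen v := by
    rw [Metric.isOpen_iff]
    rintro x ⟨hxΩ, hxS⟩
    obtain ⟨ε, hε, hball, hloc⟩ := local_struct w Ω hopen hdiff hskew hxΩ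
    refine ⟨ε, hε, fun y hy => ⟨hball hy, fun hyS => hxS ?_⟩⟩
    obtain ⟨hyL, hyw⟩ := hyS
    have hxL : fderiv ℝ w x = L₀ := by rw [← (hloc y hy).1, hyL]
    refine ⟨hxL, ?_⟩
    have h2 := (hloc y hy).2
    rw [hxL] at h2
    rw [h2] at hyw
    funext k
    have e0 := congrFun hyw k
    have e1 := congrFun (map_sub L₀ y x) k
    have e2 := congrFun (map_sub L₀ x x₀) k
    have e3 := congrFun (map_sub L₀ y x₀) k
    simp only [Pi.add_apply, Pi.sub_apply] at *
    linarith
  have hsub : Ω ⊆ u ∪ v := by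
    intro x hx
    by_cases hxS : x ∈ S
    · exact Or.inl ⟨hx, hxS⟩
    · exact Or.inr ⟨hx, hxS⟩
  have hne_u : (Ω ∩ u).Nonempty := by
    refine ⟨x₀, hx₀, hx₀, rfl, ?_⟩
    simp
  have hempty : Ω ∩ (u ∩ v) = ∅ := by
    ext x
    simp only [Set.mem_inter_iff, Set.mem_empty_iff_false, iff_false]
    rintro ⟨-, ⟨-, hxS⟩, ⟨-, hxS'⟩⟩
    exact hxS' hxS
  have hvempty : v = ∅ := by
    by_contra hne
    obtain ⟨x, hxv⟩ := Set.nonempty_iff_ne_empty.2 hne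
    have := hconn u v hou hov hsub hne_u ⟨x, hxv.1, hxv⟩
    rw [hempty] at this
    exact Set.not_nonempty_empty this
  intro x hx
  have hxS : x ∈ S := by
    by_contra hxS
    have : x ∈ v := ⟨hx, hxS⟩
    rw [hvempty] at this
    exact this
  exact hxS

noncomputable abbrev eE := EuclideanSpace.equiv (Fin 3) ℝ

lemma norm_sq_eq (y : EuclideanSpace ℝ (Fin 3)) : ‖y‖ = Real.sqrt (∑ i, (y i) ^ 2) := by
  rw [EuclideanSpace.norm_eq]
  congr 1
  exact Finset.sum_congr rfl fun i _ => by rw [Real.norm_eq_abs, sq_abs]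

lemma preconn_ball' (r₂ : ℝ) (h : 0 < r₂) :
    IsPreconnected {x : Fin 3 → ℝ | ∑ i, x i ^ 2 < r₂ ^ 2} := by
  have himg : {x : Fin 3 → ℝ | ∑ i, x i ^ 2 < r₂ ^ 2}
      = (⇑eE) '' (ball (0 : EuclideanSpace ℝ (Fin 3)) r₂) := by
    ext x
    simp only [Set.mem_setOf_eq, Set.mem_image, mem_ball_zero_iff]
    constructor
    · intro hx
      refine ⟨eE.symm x, ?_, rfl⟩
      rw [norm_sq_eq]
      have : ∀ i, (eE.symm x) i = x i := fun i => rfl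
      simp only [this]
      exact (Real.sqrt_lt' h).2 hx
    · rintro ⟨y, hy, rfl⟩
      have : ∀ i, (eE y) i = y i := fun i => rfl
      simp only [Set.mem_setOf_eq, this]
      rw [norm_sq_eq] at hy
      have hnn : 0 ≤ ∑ i, (y i) ^ 2 := Finset.sum_nonneg fun i _ => sq_nonneg _
      calc ∑ i, (y i)^2 = Real.sqrt (∑ i, (y i)^2) ^ 2 := (Real.sq_sqrt hnn).symm
        _ < r₂ ^ 2 := by
            apply pow_lt_pow_left₀ hy (Real.sqrt_nonneg _) (by norm_num)
  rw [himg]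
  exact ((convex_ball _ _).isPreconnected).image _ (eE.continuous.continuousOn)

lemma preconn_shell' (r₁ r₂ : ℝ) (h1 : 0 ≤ r₁) (h : r₁ < r₂) :
    IsPreconnected {x : Fin 3 → ℝ | r₁ ^ 2 < ∑ i, x i ^ 2 ∧ ∑ i, x i ^ 2 < r₂ ^ 2} := by
  set A : Set (EuclideanSpace ℝ (Fin 3)) := {y | r₁ < ‖y‖ ∧ ‖y‖ < r₂} with hA
  have hpre : IsPreconnected A := by
    have himg : A = (fun p : EuclideanSpace ℝ (Fin 3) × ℝ => p.2 • p.1) ''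
        ((sphere (0 : EuclideanSpace ℝ (Fin 3)) 1) ×ˢ (Set.Ioo r₁ r₂)) := by
      ext y
      simp only [hA, Set.mem_setOf_eq, Set.mem_image, Set.mem_prod, mem_sphere_zero_iff_norm,
        Set.mem_Ioo, Prod.exists]
      constructor
      · rintro ⟨hy1, hy2⟩
        have hy0 : 0 < ‖y‖ := lt_of_le_of_lt h1 hy1
        refine ⟨‖y‖⁻¹ • y, ‖y‖, ⟨?_, hy1, hy2⟩, ?_⟩
        · rw [norm_smul, norm_inv, norm_norm, inv_mul_cancel₀ hy0.ne']
        · simp [smul_smul, mul_inv_cancel₀ hy0.ne']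
      · rintro ⟨s, t, ⟨hs, ht1, ht2⟩, rfl⟩
        have ht0 : 0 ≤ t := le_trans h1 ht1.le
        rw [norm_smul, hs, mul_one, Real.norm_eq_abs, abs_of_nonneg ht0]
        exact ⟨ht1, ht2⟩
    rw [himg]
    have hsph : IsPreconnected (sphere (0 : EuclideanSpace ℝ (Fin 3)) 1) := by
      apply isPreconnected_sphere
      have : Module.rank ℝ (EuclideanSpace ℝ (Fin 3)) = 3 := by
        rw [← Module.finrank_eq_rank]
        norm_cast
        simp [finrank_euclideanSpace_fin]
      rw [this]
      norm_num
    exact (hsph.prod isPreconnected_Ioo).image _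
      ((continuous_snd.smul continuous_fst).continuousOn)
  have himg2 : {x : Fin 3 → ℝ | r₁ ^ 2 < ∑ i, x i ^ 2 ∧ ∑ i, x i ^ 2 < r₂ ^ 2}
      = (⇑eE) '' A := by
    ext x
    simp only [Set.mem_setOf_eq, Set.mem_image, hA]
    have hnn : ∀ z : Fin 3 → ℝ, 0 ≤ ∑ i, (z i) ^ 2 :=
      fun z => Finset.sum_nonneg fun i _ => sq_nonneg _
    constructor
    · rintro ⟨hx1, hx2⟩
      refine ⟨eE.symm x, ⟨?_, ?_⟩, rfl⟩
      · rw [norm_sq_eq]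
        have : ∀ i, (eE.symm x) i = x i := fun i => rfl
        simp only [this]
        exact (Real.lt_sqrt h1).2 hx1
      · rw [norm_sq_eq]
        have : ∀ i, (eE.symm x) i = x i := fun i => rfl
        simp only [this]
        exact (Real.sqrt_lt' (h1.trans_lt h)).2 hx2
    · rintro ⟨y, ⟨hy1, hy2⟩, rfl⟩
      have : ∀ i, (eE y) i = y i := fun i => rfl
      simp only [this]
      rw [norm_sq_eq] at hy1 hy2
      constructor
      · calc r₁ ^ 2 < Real.sqrt (∑ i, (y i)^2) ^ 2 :=
              pow_lt_pow_left₀ hy1 h1 (by norm_num)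
          _ = ∑ i, (y i)^2 := Real.sq_sqrt (hnn _)
      · calc ∑ i, (y i)^2 = Real.sqrt (∑ i, (y i)^2) ^ 2 := (Real.sq_sqrt (hnn _)).symm
          _ < r₂ ^ 2 := pow_lt_pow_left₀ hy2 (Real.sqrt_nonneg _) (by norm_num)
  rw [himg2]
  exact hpre.image _ (eE.continuous.continuousOn)

lemma sum_sq_single_smul (t : ℝ) (i : Fin 3) :
    ∑ j, ((t • (Pi.single i 1 : Fin 3 → ℝ)) j) ^ 2 = t ^ 2 := by
  rw [Fin.sum_univ_three]
  fin_cases i <;> simp [Pi.single_apply, Fin.ext_iff] <;> norm_num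

lemma omega_isOpen (r₁ r₂ : ℝ) (Ω : Set (Fin 3 → ℝ))
    (hΩ : Ω = {x : Fin 3 → ℝ | ∑ i, (x i) ^ 2 < r₂ ^ 2} ∨
          Ω = {x : Fin 3 → ℝ | r₁ ^ 2 < ∑ i, (x i) ^ 2 ∧ ∑ i, (x i) ^ 2 < r₂ ^ 2}) :
    IsOpen Ω := by
  have hQ : Continuous (fun x : Fin 3 → ℝ => ∑ i, (x i) ^ 2) := by
    continuity
  rcases hΩ with rfl | rfl
  · exact isOpen_lt hQ continuous_const
  · exact (isOpen_lt continuous_const hQ).inter (isOpen_lt hQ continuous_const)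

lemma omega_nonempty (r₁ r₂ : ℝ) (hr₁ : 0 ≤ r₁) (hr : r₁ < r₂) (Ω : Set (Fin 3 → ℝ))
    (hΩ : Ω = {x : Fin 3 → ℝ | ∑ i, (x i) ^ 2 < r₂ ^ 2} ∨
          Ω = {x : Fin 3 → ℝ | r₁ ^ 2 < ∑ i, (x i) ^ 2 ∧ ∑ i, (x i) ^ 2 < r₂ ^ 2}) :
    ∃ x₀, x₀ ∈ Ω := by
  have hr₂ : 0 < r₂ := hr₁.trans_lt hr
  rcases hΩ with rfl | rfl
  · exact ⟨0, by simp [Set.mem_setOf_eq]; positivity⟩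
  · refine ⟨((r₁ + r₂)/2) • (Pi.single 0 1 : Fin 3 → ℝ), ?_⟩
    simp only [Set.mem_setOf_eq, sum_sq_single_smul]
    constructor
    · apply pow_lt_pow_left₀ (by linarith) hr₁ (by norm_num)
    · apply pow_lt_pow_left₀ (by linarith) (by linarith) (by norm_num)

lemma frontier_pt (r₁ r₂ : ℝ) (hr₁ : 0 ≤ r₁) (hr : r₁ < r₂) (Ω : Set (Fin 3 → ℝ))
    (hΩ : Ω = {x : Fin 3 → ℝ | ∑ i, (x i) ^ 2 < r₂ ^ 2} ∨
          Ω = {x : Fin 3 → ℝ | r₁ ^ 2 < ∑ i, (x i) ^ 2 ∧ ∑ i, (x i) ^ 2 < r₂ ^ 2}) (i : Fin 3) :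
    r₂ • (Pi.single i 1 : Fin 3 → ℝ) ∈ frontier Ω := by
  have hr₂ : 0 < r₂ := hr₁.trans_lt hr
  set p : Fin 3 → ℝ := r₂ • (Pi.single i 1 : Fin 3 → ℝ) with hp
  have hopen := omega_isOpen r₁ r₂ Ω hΩ
  have hsum : ∀ t : ℝ, ∑ j, ((t • p) j) ^ 2 = (t * r₂) ^ 2 := by
    intro t
    have : t • p = (t * r₂) • (Pi.single i 1 : Fin 3 → ℝ) := by
      rw [hp, smul_smul]
    rw [this, sum_sq_single_smul]
  have hclos : p ∈ closure Ω := by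
    have htd : Filter.Tendsto (fun t : ℝ => t • p) (nhdsWithin 1 (Set.Iio 1)) (nhds p) := by
      have hc : Filter.Tendsto (fun t : ℝ => t • p) (nhds 1) (nhds ((1:ℝ) • p)) :=
        ((continuous_id.smul continuous_const).tendsto 1)
      simpa using hc.mono_left nhdsWithin_le_nhds
    apply mem_closure_of_tendsto htd
    have hmem : Set.Ioo (r₁ / r₂) 1 ∈ nhdsWithin (1:ℝ) (Set.Iio 1) :=
      Ioo_mem_nhdsLT_of_mem ⟨by rw [div_lt_one hr₂]; exact hr, le_refl 1⟩
    filter_upwards [hmem] with t ht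
    have ht1 : r₁ < t * r₂ := by
      have := ht.1
      rw [div_lt_iff₀ hr₂] at this
      linarith
    have ht0 : 0 < t := lt_of_le_of_lt (div_nonneg hr₁ hr₂.le) ht.1
    have ht2 : t * r₂ < r₂ := by nlinarith [ht.2]
    rcases hΩ with rfl | rfl
    · simp only [Set.mem_setOf_eq, hsum]
      exact pow_lt_pow_left₀ ht2 (by positivity) (by norm_num)
    · simp only [Set.mem_setOf_eq, hsum]
      exact ⟨pow_lt_pow_left₀ ht1 hr₁ (by norm_num),
        pow_lt_pow_left₀ ht2 (by positivity) (by norm_num)⟩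
  have hnot : p ∉ Ω := by
    have hps : ∑ j, (p j) ^ 2 = r₂ ^ 2 := by
      have := hsum 1
      simpa using this
    rcases hΩ with rfl | rfl
    · simp [Set.mem_setOf_eq, hps]
    · simp [Set.mem_setOf_eq, hps]
  rw [hopen.frontier_eq]
  exact ⟨hclos, hnot⟩


/-- The Jacobian matrix of a vector field on `ℝ³`. -/
noncomputable def jac7 (w : (Fin 3 → ℝ) → (Fin 3 → ℝ)) (x : Fin 3 → ℝ) :
    Fin 3 → Fin 3 → ℝ :=
  fun i j => fderiv ℝ w x (Pi.single j 1) i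

/-- The three rotational vector fields `Y₁, Y₂, Y₃` generating rigid rotations
about the coordinate axes. -/
def Yrot (k : Fin 3) (x : Fin 3 → ℝ) : Fin 3 → ℝ :=
  ![![0, -(x 2), x 1], ![x 2, 0, -(x 0)], ![-(x 1), x 0, 0]] k

/-- Corollary 7.3 (3) / Section 7: on a ball or spherical shell `Ω` centered at
the origin, the kernel of the symmetrized gradient `S` among divergence-free
`H¹` vector fields tangent to `∂Ω` is exactly the 3-dimensional space spanned
by `Y₁ x = (0, -x₃, x₂)`, `Y₂ x = (x₃, 0, -x₁)`, `Y₃ x = (-x₂, x₁, 0)`. -/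
theorem kerS_sphere_spanned_by_rotations
    (r₁ r₂ : ℝ) (hr₁ : 0 ≤ r₁) (hr : r₁ < r₂) (Ω : Set (Fin 3 → ℝ))
    (hΩ : Ω = {x : Fin 3 → ℝ | ∑ i, (x i) ^ 2 < r₂ ^ 2} ∨
          Ω = {x : Fin 3 → ℝ | r₁ ^ 2 < ∑ i, (x i) ^ 2 ∧ ∑ i, (x i) ^ 2 < r₂ ^ 2})
    (w : (Fin 3 → ℝ) → (Fin 3 → ℝ))
    (hw_cont : ContinuousOn w (closure Ω))
    (hw_diff : ∀ x ∈ Ω, DifferentiableAt ℝ w x) :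
    ((∀ x ∈ Ω, ∑ i, jac7 w x i i = 0) ∧
     (∀ x ∈ frontier Ω, w x ⬝ᵥ x = 0) ∧
     (∀ x ∈ Ω, ∀ i j, jac7 w x i j + jac7 w x j i = 0)) ↔
    (∃ α β γ : ℝ, ∀ x ∈ closure Ω,
      w x = α • Yrot 0 x + β • Yrot 1 x + γ • Yrot 2 x) := by
  have hr₂ : 0 < r₂ := hr₁.trans_lt hr
  have hopen : IsOpen Ω := omega_isOpen r₁ r₂ Ω hΩ
  constructor
  · rintro ⟨_, h2, h3⟩
    -- full skewness
    have hskew : ∀ x ∈ Ω, ∀ u v, fderiv ℝ w x u ⬝ᵥ v + fderiv ℝ w x v ⬝ᵥ u = 0 := by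
      intro x hx
      exact skew_bilin (fderiv ℝ w x) (fun i j => h3 x hx i j)
    have hconn : IsPreconnected Ω := by
      rcases hΩ with rfl | rfl
      · exact preconn_ball' r₂ hr₂
      · exact preconn_shell' r₁ r₂ hr₁ hr
    obtain ⟨x₀, hx₀⟩ := omega_nonempty r₁ r₂ hr₁ hr Ω hΩ
    set L₀ := fderiv ℝ w x₀ with hL₀
    have hglob := global_affine w Ω hopen hconn hw_diff hskew hx₀
    set b : Fin 3 → ℝ := w x₀ - L₀ x₀ with hb
    set c : (Fin 3 → ℝ) → (Fin 3 → ℝ) := fun x => L₀ x + b with hc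
    have hcΩ : Set.EqOn w c Ω := by
      intro x hx
      have := (hglob x hx).2
      rw [this, hc, hb]
      funext k
      have e1 := congrFun (map_sub L₀ x x₀) k
      simp only [Pi.add_apply, Pi.sub_apply] at *
      linarith
    have hccont : ContinuousOn c (closure Ω) :=
      ((L₀.continuous.add continuous_const).continuousOn)
    have hclos : Set.EqOn w c (closure Ω) :=
      Set.EqOn.of_subset_closure hcΩ hw_cont hccont subset_closure le_rfl
    -- kill b via boundary condition
    have hA : ∀ i j, jac7 w x₀ i j + jac7 w x₀ j i = 0 := h3 x₀ hx₀
    have hbzero : ∀ i, b i = 0 := by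
      intro i
      set p : Fin 3 → ℝ := r₂ • (Pi.single i 1 : Fin 3 → ℝ) with hp
      have hfr := frontier_pt r₁ r₂ hr₁ hr Ω hΩ i
      have hpc : p ∈ closure Ω := frontier_subset_closure hfr
      have hwp := h2 p hfr
      rw [hclos hpc] at hwp
      have hLp : L₀ p = r₂ • L₀ (Pi.single i 1) := by
        rw [hp]; exact L₀.map_smul r₂ _
      have hdot : (c p) ⬝ᵥ p = r₂ ^ 2 * (L₀ (Pi.single i 1) i) + r₂ * b i := by
        show (L₀ p + b) ⬝ᵥ p = _
        rw [hLp, hp]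
        simp only [dotProduct, Fin.sum_univ_three, Pi.add_apply, Pi.smul_apply,
          smul_eq_mul, Pi.single_apply]
        fin_cases i <;> simp <;> ring
      have hdiag : L₀ (Pi.single i 1) i = 0 := by
        have := hA i i
        simp only [jac7] at this
        linarith
      rw [hdot, hdiag] at hwp
      have : r₂ * b i = 0 := by linarith
      exact (mul_eq_zero.1 this).resolve_left hr₂.ne'
    refine ⟨jac7 w x₀ 2 1, jac7 w x₀ 0 2, jac7 w x₀ 1 0, ?_⟩
    intro x hx
    rw [hclos hx, hc]
    have hxdec := vec_decomp x
    have hLx : L₀ x = x 0 • L₀ (Pi.single 0 1) + x 1 • L₀ (Pi.single 1 1)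
        + x 2 • L₀ (Pi.single 2 1) := by
      conv_lhs => rw [hxdec]
      simp [map_add, _root_.map_smul]
    funext k
    have h01 := hA 0 1; have h02 := hA 0 2; have h12 := hA 1 2
    have h00 := hA 0 0; have h11 := hA 1 1; have h22 := hA 2 2
    simp only [jac7] at h01 h02 h12 h00 h11 h22 ⊢
    rw [← hL₀] at h01 h02 h12 h00 h11 h22 ⊢
    rw [hLx]
    fin_cases k
    · simp only [Yrot, hbzero, Pi.add_apply, Pi.smul_apply, smul_eq_mul,
        Matrix.cons_val_zero, Matrix.cons_val_one, Matrix.head_cons, add_zero, Fin.isValue,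
        Matrix.cons_val_two, Matrix.tail_cons]
      simp [Yrot, hbzero]
      linear_combination (x 0 / 2) * h00 + x 1 * h01
    · simp [Yrot, hbzero]
      linear_combination (x 1 / 2) * h11 + x 2 * h12
    · simp [Yrot, hbzero]
      linear_combination x 0 * h02 + (x 2 / 2) * h22
  · rintro ⟨α, β, γ, hw⟩
    set Amat : Matrix (Fin 3) (Fin 3) ℝ := !![0, -γ, β; γ, 0, -α; -β, α, 0] with hAmat
    set M : (Fin 3 → ℝ) →L[ℝ] (Fin 3 → ℝ) :=
      LinearMap.toContinuousLinearMap (Matrix.mulVecLin Amat) with hM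
    have hMapp : ∀ z, M z = Amat.mulVec z := fun z => rfl
    have hcombo : ∀ z, α • Yrot 0 z + β • Yrot 1 z + γ • Yrot 2 z = M z := by
      intro z
      funext k
      rw [hMapp]
      fin_cases k <;>
        simp [Yrot, Matrix.mulVec, dotProduct, Fin.sum_univ_three, hAmat] <;> ring
    have hfd : ∀ x ∈ Ω, fderiv ℝ w x = M := by
      intro x hx
      have hev : (fun z => M z) =ᶠ[nhds x] w := by
        filter_upwards [hopen.mem_nhds hx] with z hz
        rw [hw z (subset_closure hz), hcombo]
      exact (M.hasFDerivAt.congr_of_eventuallyEq hev.symm).fderiv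
    have hjac : ∀ x ∈ Ω, ∀ i j, jac7 w x i j = Amat i j := by
      intro x hx i j
      simp only [jac7, hfd x hx, hMapp]
      rw [Matrix.mulVec_single]
      simp
    refine ⟨?_, ?_, ?_⟩
    · intro x hx
      rw [Fin.sum_univ_three, hjac x hx, hjac x hx, hjac x hx]
      simp [hAmat]
    · intro x hx
      rw [hw x (frontier_subset_closure hx)]
      simp only [dotProduct, Fin.sum_univ_three, Pi.add_apply, Pi.smul_apply, smul_eq_mul, Yrot]
      simp
      ring
    · intro x hx i j
      rw [hjac x hx, hjac x hx]
      fin_cases i <;> fin_cases j <;> simp [hAmat] <;> ring
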